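/- Suppose a sequence {x_k} in ℝ^n satisfies, for every x* in a nonempty set X* and constants C > 0, m ≥ 1, p > 0: ‖x_{k+1} - x*‖² ≤ ‖x_k - x*‖² - 2 v_k C (f(x_k) - f*)^{1/p} + m² v_k², with f(x_k) ≥ f* for all k, v_k > 0, ∑_k v_k = ∞ and ∑_k v_k² < ∞, and suppose f is continuous with X* = {x ∈ X : f(x) = f*} containing every cluster point of {x_k} at which f attains f*. Then {x_k} converges to a point of X*. -/
import Mathlib


open Filter

private lemma quasiFejer (a e : ℕ → ℝ) (ha : ∀ k, 0 ≤ a k) (he : ∀ k, 0 ≤ e k)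
    (hes : Summable e) (hstep : ∀ k, a (k + 1) ≤ a k + e k) :
    ∃ L, Tendsto a atTop (nhds L) := by
  set s : ℕ → ℝ := fun k => ∑ i ∈ Finset.range k, e i with hs
  have hsle : ∀ k, s k ≤ ∑' i, e i := fun k => Summable.sum_le_tsum _ (fun i _ => he i) hes
  set b : ℕ → ℝ := fun k => a k - s k with hb
  have hanti : Antitone b := antitone_nat_of_succ_le fun k => by
    have h1 := hstep k
    simp only [hb, hs, Finset.sum_range_succ]
    linarith
  have hbdd : BddBelow (Set.range b) := ⟨-∑' i, e i, by
    rintro _ ⟨k, rfl⟩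
    have h1 := hsle k
    have h2 := ha k
    simp only [hb]; linarith⟩
  have hbt := tendsto_atTop_ciInf hanti hbdd
  have hst : Tendsto s atTop (nhds (∑' i, e i)) := hes.hasSum.tendsto_sum_nat
  refine ⟨_, (hbt.add hst).congr (fun k => ?_)⟩
  simp [hb]

/-- Abstract form of Theorem 3.3(iii): square-summable diminishing stepsizes. -/
theorem stmt11 {n : ℕ} (x : ℕ → EuclideanSpace ℝ (Fin n))
    (X Xstar : Set (EuclideanSpace ℝ (Fin n))) (hne : Xstar.Nonempty)
    (f : EuclideanSpace ℝ (Fin n) → ℝ) (fstar C m p : ℝ)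
    (hC : 0 < C) (hm : 1 ≤ m) (hp : 0 < p)
    (hcont : Continuous f)
    (hXstar : Xstar = {y ∈ X | f y = fstar})
    (hf : ∀ k, fstar ≤ f (x k))
    (v : ℕ → ℝ) (hvpos : ∀ k, 0 < v k)
    (hvsum : Tendsto (fun N => ∑ k ∈ Finset.range N, v k) atTop atTop)
    (hv2 : Summable fun k => v k ^ 2)
    (hcluster : ∀ y, MapClusterPt y atTop x → f y = fstar → y ∈ Xstar)
    (hBI : ∀ xs ∈ Xstar, ∀ k, ‖x (k + 1) - xs‖ ^ 2 ≤ ‖x k - xs‖ ^ 2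
        - 2 * v k * C * (f (x k) - fstar) ^ (1 / p) + m ^ 2 * v k ^ 2) :
    ∃ xbar ∈ Xstar, Tendsto x atTop (nhds xbar) := by
  obtain ⟨xs, hxs⟩ := hne
  set d : ℕ → ℝ := fun k => (f (x k) - fstar) ^ (1 / p) with hd
  have hd0 : ∀ k, 0 ≤ d k := fun k => Real.rpow_nonneg (by linarith [hf k]) _
  set e : ℕ → ℝ := fun k => m ^ 2 * v k ^ 2 with he
  have hes : Summable e := hv2.mul_left _
  have he0 : ∀ k, 0 ≤ e k := fun k => by positivity
  -- generic step inequality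
  have step : ∀ z ∈ Xstar, ∀ k, ‖x (k + 1) - z‖ ^ 2 ≤ ‖x k - z‖ ^ 2 + e k := by
    intro z hz k
    have h1 := hBI z hz k
    have h2 : 0 ≤ 2 * v k * C * d k :=
      mul_nonneg (mul_nonneg (mul_nonneg (by norm_num) (hvpos k).le) hC.le) (hd0 k)
    simp only [he]
    linarith
  -- summed inequality for xs
  have sumineq : ∀ K, ‖x K - xs‖ ^ 2 + 2 * C * ∑ k ∈ Finset.range K, v k * d k
      ≤ ‖x 0 - xs‖ ^ 2 + ∑ k ∈ Finset.range K, e k := by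
    intro K
    induction K with
    | zero => simp
    | succ K ih =>
      have h1 := hBI xs hxs K
      simp only [Finset.sum_range_succ]
      simp only [he] at *
      linarith
  have hvd0 : ∀ k, 0 ≤ v k * d k := fun k => mul_nonneg (hvpos k).le (hd0 k)
  have hvdsum : Summable fun k => v k * d k := by
    apply summable_of_sum_range_le hvd0 (c := (‖x 0 - xs‖ ^ 2 + ∑' i, e i) / (2 * C))
    intro K
    rw [le_div_iff₀ (by positivity)]
    have h1 := sumineq K
    have h2 : ∑ k ∈ Finset.range K, e k ≤ ∑' i, e i := Summable.sum_le_tsum _ (fun i _ => he0 i) hes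
    have h3 : 0 ≤ ‖x K - xs‖ ^ 2 := by positivity
    linarith
  -- frequently small d
  have hfreq : ∀ N : ℕ, ∃ᶠ k in atTop, d k < 1 / (N + 1) := by
    intro N
    by_contra hcon
    rw [not_frequently] at hcon
    obtain ⟨N₀, hN₀⟩ := (eventually_atTop).1 hcon
    have hsum' : Summable fun k => v (k + N₀) * d (k + N₀) :=
      (summable_nat_add_iff N₀).2 hvdsum
    have hsumv : Summable fun k => v (k + N₀) := by
      apply Summable.of_nonneg_of_le (fun k => (hvpos _).le) (fun k => ?_)
        (hsum'.mul_left ((N : ℝ) + 1))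
      have hk : (1 : ℝ) / (N + 1) ≤ d (k + N₀) := not_lt.1 (hN₀ (k + N₀) (Nat.le_add_left _ _))
      have hv := (hvpos (k + N₀)).le
      have hNd : (1 : ℝ) ≤ ((N : ℝ) + 1) * d (k + N₀) := by
        have hpos : (0 : ℝ) < (N : ℝ) + 1 := by positivity
        calc (1 : ℝ) = ((N : ℝ) + 1) * (1 / ((N : ℝ) + 1)) := by field_simp
          _ ≤ _ := mul_le_mul_of_nonneg_left hk hpos.le
      calc v (k + N₀) = v (k + N₀) * 1 := (mul_one _).symm
        _ ≤ v (k + N₀) * (((N : ℝ) + 1) * d (k + N₀)) := mul_le_mul_of_nonneg_left hNd hv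
        _ = ((N : ℝ) + 1) * (v (k + N₀) * d (k + N₀)) := by ring
    have hsumv' : Summable v := (summable_nat_add_iff N₀).1 hsumv
    exact not_tendsto_atTop_of_tendsto_nhds hsumv'.hasSum.tendsto_sum_nat hvsum
  obtain ⟨φ, hφmono, hφ⟩ := extraction_forall_of_frequently hfreq
  have hdφ : Tendsto (fun N => d (φ N)) atTop (nhds 0) := by
    apply squeeze_zero (fun N => hd0 _) (fun N => (hφ N).le)
    exact tendsto_one_div_add_atTop_nhds_zero_nat
  -- boundedness
  set S : ℝ := ∑' i, e i with hS
  have habd' : ∀ K, ‖x K - xs‖ ^ 2 ≤ ‖x 0 - xs‖ ^ 2 + ∑ i ∈ Finset.range K, e i := by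
    intro K
    induction K with
    | zero => simp
    | succ K ih =>
      have h1 := step xs hxs K
      simp only [Finset.sum_range_succ]
      linarith
  have habd : ∀ k, ‖x k - xs‖ ^ 2 ≤ ‖x 0 - xs‖ ^ 2 + S := fun k =>
    (habd' k).trans (by have := Summable.sum_le_tsum (Finset.range k) (fun i _ => he0 i) hes; linarith)
  set R : ℝ := Real.sqrt (‖x 0 - xs‖ ^ 2 + S) with hR
  have hball : ∀ k, x k ∈ Metric.closedBall xs R := by
    intro k
    rw [Metric.mem_closedBall, dist_eq_norm]
    have h1 : ‖x k - xs‖ = Real.sqrt (‖x k - xs‖ ^ 2) := (Real.sqrt_sq (norm_nonneg _)).symm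
    rw [h1, hR]
    exact Real.sqrt_le_sqrt (habd k)
  obtain ⟨y, -, ψ, hψmono, hψ⟩ :=
    tendsto_subseq_of_bounded Metric.isBounded_closedBall (fun N => hball (φ N))
  set σ : ℕ → ℕ := φ ∘ ψ with hσ
  have hσmono : StrictMono σ := hφmono.comp hψmono
  have hxσ : Tendsto (x ∘ σ) atTop (nhds y) := hψ
  have hdσ : Tendsto (fun j => d (σ j)) atTop (nhds 0) := hdφ.comp hψmono.tendsto_atTop
  -- f y = fstar
  have hdp : ∀ k, d k ^ p = f (x k) - fstar := by
    intro k
    have hnn : 0 ≤ f (x k) - fstar := by linarith [hf k]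
    rw [hd]
    rw [← Real.rpow_mul hnn, one_div_mul_cancel hp.ne', Real.rpow_one]
  have hfy : f y = fstar := by
    have h1 : Tendsto (fun j => f (x (σ j)) - fstar) atTop (nhds 0) := by
      have h2 : Tendsto (fun j => d (σ j) ^ p) atTop (nhds ((0 : ℝ) ^ p)) :=
        hdσ.rpow_const (Or.inr hp.le)
      rw [Real.zero_rpow hp.ne'] at h2
      exact h2.congr fun j => hdp (σ j)
    have h3 : Tendsto (fun j => f (x (σ j)) - fstar) atTop (nhds (f y - fstar)) :=
      ((hcont.tendsto y).comp hxσ).sub_const fstar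
    have := tendsto_nhds_unique h3 h1
    linarith
  have hy : y ∈ Xstar := hcluster y (.of_comp hσmono.tendsto_atTop hxσ.mapClusterPt) hfy
  -- quasi-Fejér convergence to y
  obtain ⟨L, hL⟩ := quasiFejer (fun k => ‖x k - y‖ ^ 2) e (fun k => by positivity) he0 hes
    (step y hy)
  have hL0 : L = 0 := by
    have h1 : Tendsto (fun j => ‖x (σ j) - y‖ ^ 2) atTop (nhds L) :=
      hL.comp hσmono.tendsto_atTop
    have h2 : Tendsto (fun j => ‖x (σ j) - y‖ ^ 2) atTop (nhds (‖y - y‖ ^ 2)) :=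
      (((hxσ.sub_const y).norm).pow 2)
    have := tendsto_nhds_unique h1 h2
    simpa using this
  refine ⟨y, hy, tendsto_iff_norm_sub_tendsto_zero.2 ?_⟩
  have h1 : Tendsto (fun k => Real.sqrt (‖x k - y‖ ^ 2)) atTop (nhds (Real.sqrt 0)) := by
    rw [← hL0]; exact (Real.continuous_sqrt.tendsto L).comp hL
  simpa [Real.sqrt_sq, norm_nonneg] using h1
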